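/- Let [a,b] be a compact interval, let F and F̂ be continuous real-valued functions on [a,b], and let 𝔽 be a bounded measurable real-valued function on [a,b]. Assume: (3) F̂(a) = 𝔽(a) and F̂(b) = 𝔽(b); (4) F̂ is differentiable on (a,b) and its derivative is the restriction of an affine function x ↦ αx + β; (5) F is differentiable on (a,b) and its derivative is convex on (a,b); (7) for every r ∈ [a,b], ∫_a^r F̂(x) dx ≥ ∫_a^r 𝔽(x) dx. Then inf_{x ∈ [a,b]} (F̂(x) − F(x)) ≥ (3/2)·inf_{x ∈ [a,b]} (𝔽(x) − F(x)) − (1/2)·(𝔽(a) − F(a)). -/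

import Mathlib

open MeasureTheory Set


open MeasureTheory Set intervalIntegral Topology Filter

/-- Chord inequality for concave functions, cleared of denominators. -/
lemma marshall_concave_chord {ψ : ℝ → ℝ} {s : Set ℝ} (hc : ConcaveOn ℝ s ψ)
    {u v t : ℝ} (hu : u ∈ s) (ht : t ∈ s)
    (huv : u ≤ v) (hvt : v ≤ t) (hut : u < t) :
    ψ u * (t - v) + ψ t * (v - u) ≤ ψ v * (t - u) := by
  have htu : (0:ℝ) < t - u := sub_pos.2 hut
  have ha : (0:ℝ) ≤ (t - v) / (t - u) := div_nonneg (by linarith) htu.le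
  have hb : (0:ℝ) ≤ (v - u) / (t - u) := div_nonneg (by linarith) htu.le
  have hsum : (t - v) / (t - u) + (v - u) / (t - u) = 1 := by
    field_simp
    ring
  have h := hc.2 hu ht ha hb hsum
  have hcombo : ((t - v) / (t - u)) • u + ((v - u) / (t - u)) • t = v := by
    simp only [smul_eq_mul]
    field_simp
    ring
  rw [hcombo] at h
  simp only [smul_eq_mul] at h
  have h2 := mul_le_mul_of_nonneg_right h htu.le
  have h3 : ((t - v) / (t - u) * ψ u + (v - u) / (t - u) * ψ t) * (t - u)
      = ψ u * (t - v) + ψ t * (v - u) := by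
    field_simp
  rw [h3] at h2
  linarith

/-- Core quadrature inequality: if `D' = ψ` on `[a', t]`, `ψ` concave with `ψ t = 0`, then
`∫_{a'}^t D ≤ (2/3)(t-a') D(t) + (1/3)(t-a') D(a')`. -/
lemma marshall_core {a' t : ℝ} (h : a' < t) (D ψ : ℝ → ℝ)
    (hDψ : ∀ x ∈ Icc a' t, HasDerivAt D (ψ x) x)
    (hψcont : ContinuousOn ψ (Icc a' t))
    (hψconc : ConcaveOn ℝ (Icc a' t) ψ)
    (hψt : ψ t = 0) :
    ∫ x in a'..t, D x ≤ 2/3 * (t - a') * D t + 1/3 * (t - a') * D a' := by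
  have huIcc : uIcc a' t = Icc a' t := uIcc_of_le h.le
  set u₀ : ℝ := (2 * a' + t) / 3 with hu₀def
  have hu₀mem : u₀ ∈ Icc a' t := ⟨by rw [hu₀def]; linarith, by rw [hu₀def]; linarith⟩
  have htu₀ : u₀ < t := by rw [hu₀def]; linarith
  set c : ℝ := ψ u₀ / (t - u₀) with hcdef
  -- interval integrability
  have hψint : IntervalIntegrable ψ volume a' t :=
    ContinuousOn.intervalIntegrable (by rw [huIcc]; exact hψcont)
  have hIψcont : ContinuousOn (fun x => (x - u₀) * ψ x) (Icc a' t) :=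
    ((continuousOn_id.sub continuousOn_const).mul hψcont)
  have hIψint : IntervalIntegrable (fun x => (x - u₀) * ψ x) volume a' t :=
    ContinuousOn.intervalIntegrable (by rw [huIcc]; exact hIψcont)
  have hpolyint : IntervalIntegrable (fun x => c * ((x - u₀) * (t - x))) volume a' t :=
    (Continuous.intervalIntegrable (by continuity) a' t)
  -- FTC
  have hftc : ∫ x in a'..t, ψ x = D t - D a' :=
    integral_eq_sub_of_hasDerivAt (fun x hx => hDψ x (huIcc ▸ hx)) hψint
  -- integration by parts
  have hparts : ∫ x in a'..t, D x * 1
      = D t * (t - t) - D a' * (a' - t) - ∫ x in a'..t, ψ x * (x - t) :=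
    integral_mul_deriv_eq_deriv_mul (u := D) (v := fun x => x - t) (u' := ψ)
      (v' := fun _ => (1:ℝ))
      (fun x hx => hDψ x (huIcc ▸ hx))
      (fun x _ => (hasDerivAt_id x).sub_const t)
      hψint intervalIntegrable_const
  have hparts' : ∫ x in a'..t, D x
      = -(D a' * (a' - t)) - ∫ x in a'..t, ψ x * (x - t) := by
    simpa using hparts
  -- split
  have hsplit : ∫ x in a'..t, ψ x * (x - t)
      = (∫ x in a'..t, (x - u₀) * ψ x) + (u₀ - t) * ∫ x in a'..t, ψ x := by
    rw [← intervalIntegral.integral_const_mul,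
      ← intervalIntegral.integral_add hIψint (hψint.const_mul (u₀ - t))]
    apply intervalIntegral.integral_congr
    intro x _
    ring
  -- the vanishing polynomial integral
  have hzero : ∫ x in a'..t, c * ((x - u₀) * (t - x)) = 0 := by
    have hP : ∀ x : ℝ, HasDerivAt
        (fun y => c * (-(y^3)/3 + (t + u₀)/2 * y^2 - u₀ * t * y))
        (c * ((x - u₀) * (t - x))) x := by
      intro x
      have h1 : HasDerivAt (fun y : ℝ => -(y^3)/3 + (t + u₀)/2 * y^2 - u₀ * t * y)
          (-(3 * x^2)/3 + (t + u₀)/2 * (2 * x^1) - u₀ * t * 1) x := by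
        exact (((hasDerivAt_pow 3 x).neg.div_const 3).add
          ((hasDerivAt_pow 2 x).const_mul ((t + u₀)/2))).sub
          ((hasDerivAt_id x).const_mul (u₀ * t))
      have h2 := h1.const_mul c
      exact h2.congr_deriv (by ring)
    have := integral_eq_sub_of_hasDerivAt (fun x _ => hP x)
      (Continuous.intervalIntegrable (by continuity) a' t)
    rw [this, hu₀def]
    ring
  -- pointwise inequality
  have hpoint : ∀ x ∈ Icc a' t, c * ((x - u₀) * (t - x)) ≤ (x - u₀) * ψ x := by
    intro x hx
    have htu₀' : (0:ℝ) < t - u₀ := sub_pos.2 htu₀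
    have hgoal : c * ((x - u₀) * (t - x)) ≤ (x - u₀) * ψ x ↔
        ψ u₀ * ((x - u₀) * (t - x)) ≤ (x - u₀) * ψ x * (t - u₀) := by
      rw [hcdef, div_mul_eq_mul_div, div_le_iff₀ htu₀']
    rw [hgoal]
    rcases le_or_gt x u₀ with hxu | hxu
    · have hch := marshall_concave_chord hψconc hx (right_mem_Icc.2 h.le)
        hxu htu₀.le (lt_of_le_of_lt hxu htu₀)
      rw [hψt] at hch
      have key := mul_le_mul_of_nonneg_right hch (sub_nonneg.2 hxu)
      nlinarith [key]
    · have hch := marshall_concave_chord hψconc hu₀mem (right_mem_Icc.2 h.le)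
        hxu.le hx.2 htu₀
      rw [hψt] at hch
      have key := mul_le_mul_of_nonneg_right hch (sub_nonneg.2 hxu.le)
      nlinarith [key]
  have hI : 0 ≤ ∫ x in a'..t, (x - u₀) * ψ x := by
    have hmono := intervalIntegral.integral_mono_on h.le hpolyint hIψint hpoint
    linarith [hzero ▸ hmono]
  -- combine
  have hval : u₀ - t = 2/3 * (a' - t) := by rw [hu₀def]; ring
  have hsplit' : ∫ x in a'..t, ψ x * (x - t)
      = (∫ x in a'..t, (x - u₀) * ψ x) + 2/3 * (a' - t) * (D t - D a') := by
    rw [hsplit, hval, hftc]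
  have hEq : ∫ x in a'..t, D x
      = 2/3 * (t - a') * D t + 1/3 * (t - a') * D a'
        - ∫ x in a'..t, (x - u₀) * ψ x := by
    linear_combination hparts' - hsplit'
  linarith

/-- Marshall-type lemma for convex density estimation, Lemma 1, second part:
under conditions (3)-(5) and (7), `inf (F̂ - F) ≥ (3/2) inf (𝔽 - F) - (1/2)(𝔽 - F)(a)` on `[a,b]`. -/
theorem marshall_lemma_inf
    (a b : ℝ) (hab : a < b) (F Fhat EDF : ℝ → ℝ)
    (hFcont : ContinuousOn F (Icc a b))
    (hFhatcont : ContinuousOn Fhat (Icc a b))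
    (hmeas : AEMeasurable EDF (volume.restrict (Icc a b)))
    (hbdd : ∃ C : ℝ, ∀ x ∈ Icc a b, |EDF x| ≤ C)
    (h3a : Fhat a = EDF a) (h3b : Fhat b = EDF b)
    (h4 : ∃ α β : ℝ, ∀ x ∈ Ioo a b, HasDerivAt Fhat (α * x + β) x)
    (h5 : ∃ f : ℝ → ℝ, (∀ x ∈ Ioo a b, HasDerivAt F (f x) x) ∧ ConvexOn ℝ (Ioo a b) f)
    (h7 : ∀ r ∈ Icc a b, ∫ x in a..r, EDF x ≤ ∫ x in a..r, Fhat x) :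
    (3 / 2) * sInf ((fun x => EDF x - F x) '' Icc a b) - (1 / 2) * (EDF a - F a) ≤
      sInf ((fun x => Fhat x - F x) '' Icc a b) := by
  obtain ⟨C, hC⟩ := hbdd
  obtain ⟨α, β, h4'⟩ := h4
  obtain ⟨f, hf', hfconv⟩ := h5
  set D : ℝ → ℝ := fun x => Fhat x - F x with hDdef
  have hDcont : ContinuousOn D (Icc a b) := hFhatcont.sub hFcont
  have hne : (Icc a b).Nonempty := nonempty_Icc.2 hab.le
  obtain ⟨t, htmem, htmin⟩ := isCompact_Icc.exists_isMinOn hne hDcont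
  have htmin' : ∀ x ∈ Icc a b, D t ≤ D x := fun x hx => htmin hx
  obtain ⟨M, hM⟩ := isCompact_Icc.exists_bound_of_continuousOn hFcont
  have hbddbelow : BddBelow ((fun x => EDF x - F x) '' Icc a b) := by
    refine ⟨-C - M, ?_⟩
    rintro y ⟨x, hx, rfl⟩
    have h1 := hC x hx
    have h2 := hM x hx
    rw [Real.norm_eq_abs] at h2
    have := abs_le.1 h1
    have := abs_le.1 h2
    simp only []
    linarith [this.1, this.2]
  set ε : ℝ := sInf ((fun x => EDF x - F x) '' Icc a b) with hεdef
  have hεle : ∀ x ∈ Icc a b, ε ≤ EDF x - F x := fun x hx =>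
    csInf_le hbddbelow ⟨x, hx, rfl⟩
  have hεa : ε ≤ EDF a - F a := hεle a (left_mem_Icc.2 hab.le)
  have hmain : 3/2 * ε - 1/2 * (EDF a - F a) ≤ D t := by
    rcases eq_or_lt_of_le htmem.1 with hta | hta
    · -- t = a
      have : D t = EDF a - F a := by rw [← hta, hDdef]; simp [← hta, h3a]
      rw [this]; linarith
    rcases eq_or_lt_of_le htmem.2 with htb | htb
    · -- t = b
      have hDb : D t = EDF b - F b := by rw [htb]; simp [hDdef, h3b]
      have := hεle b (right_mem_Icc.2 hab.le)
      rw [hDb]; linarith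
    -- interior case
    · have hDa : D a = EDF a - F a := by simp [hDdef, h3a]
      have hDderiv : ∀ x ∈ Ioo a b, HasDerivAt D (α * x + β - f x) x :=
        fun x hx => (h4' x hx).sub (hf' x hx)
      set ψ : ℝ → ℝ := fun x => α * x + β - f x with hψdef
      have hψconc : ConcaveOn ℝ (Ioo a b) ψ := by
        have haff : ConcaveOn ℝ (Ioo a b) (fun x : ℝ => α * x + β) := by
          refine ⟨convex_Ioo a b, ?_⟩
          intro x _ y _ p q hp hq hpq
          simp only [smul_eq_mul]
          have : q = 1 - p := by linarith
          subst this
          apply le_of_eq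
          ring
        exact haff.sub hfconv
      have hlocmin : IsLocalMin D t := htmin.isLocalMin (Icc_mem_nhds hta htb)
      have hψt : ψ t = 0 := hlocmin.hasDerivAt_eq_zero (hDderiv t ⟨hta, htb⟩)
      have hψcont : ContinuousOn ψ (Ioo a b) := by
        have := hfconv.continuousOn isOpen_Ioo
        exact (Continuous.continuousOn (by continuity)).sub this
      -- integrabilities on [a, t]
      have hsubab : Icc a t ⊆ Icc a b := Icc_subset_Icc le_rfl htmem.2
      have hFint : IntervalIntegrable F volume a t :=
        ContinuousOn.intervalIntegrable
          (by rw [uIcc_of_le hta.le]; exact hFcont.mono hsubab)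
      have hFhatint : IntervalIntegrable Fhat volume a t :=
        ContinuousOn.intervalIntegrable
          (by rw [uIcc_of_le hta.le]; exact hFhatcont.mono hsubab)
      have hDintat : IntervalIntegrable D volume a t :=
        ContinuousOn.intervalIntegrable
          (by rw [uIcc_of_le hta.le]; exact hDcont.mono hsubab)
      have hEDFint : IntervalIntegrable EDF volume a t := by
        rw [intervalIntegrable_iff_integrableOn_Ioc_of_le hta.le]
        have hsub : Ioc a t ⊆ Icc a b := fun x hx => ⟨hx.1.le, hx.2.trans htmem.2⟩
        have hmeas' : AEMeasurable EDF (volume.restrict (Ioc a t)) :=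
          hmeas.mono_measure (Measure.restrict_mono hsub le_rfl)
        refine Integrable.mono' (integrable_const C) hmeas'.aestronglyMeasurable ?_
        refine (ae_restrict_iff' measurableSet_Ioc).2 (Filter.Eventually.of_forall fun x hx => ?_)
        simpa [Real.norm_eq_abs] using hC x (hsub hx)
      -- step 1 : ε (t - a) ≤ ∫_a^t D
      have hstep1 : ε * (t - a) ≤ ∫ x in a..t, D x := by
        have h7t := h7 t htmem
        have h1 : (∫ x in a..t, (EDF x - F x)) ≤ ∫ x in a..t, D x := by
          rw [hDdef]
          rw [intervalIntegral.integral_sub hEDFint hFint,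
            intervalIntegral.integral_sub hFhatint hFint]
          linarith
        have h2 : ε * (t - a) ≤ ∫ x in a..t, (EDF x - F x) := by
          have hconst : ∫ x in a..t, (ε : ℝ) = (t - a) * ε := by
            rw [intervalIntegral.integral_const]; simp [smul_eq_mul]
          have := intervalIntegral.integral_mono_on hta.le
            intervalIntegrable_const (hEDFint.sub hFint)
            (fun x hx => hεle x (hsubab hx))
          rw [hconst] at this
          linarith
        linarith
      -- step 2 : for a' ∈ Ioo a t, the core bound
      have hcore : ∀ a' ∈ Ioo a t,
          ε * (t - a) ≤ (∫ x in a..a', D x) + 2/3 * (t - a') * D t + 1/3 * (t - a') * D a' := by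
        intro a' ha'
        have ha't : a' < t := ha'.2
        have hsubIoo : Icc a' t ⊆ Ioo a b :=
          fun x hx => ⟨lt_of_lt_of_le ha'.1 hx.1, lt_of_le_of_lt hx.2 htb⟩
        have hcb := marshall_core ha't D ψ
          (fun x hx => hDderiv x (hsubIoo hx))
          (hψcont.mono hsubIoo)
          (hψconc.subset hsubIoo (convex_Icc a' t))
          hψt
        have hsubaa' : Icc a a' ⊆ Icc a b :=
          Icc_subset_Icc le_rfl (ha't.le.trans htmem.2)
        have hint1 : IntervalIntegrable D volume a a' :=
          ContinuousOn.intervalIntegrable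
            (by rw [uIcc_of_le ha'.1.le]; exact hDcont.mono hsubaa')
        have hint2 : IntervalIntegrable D volume a' t :=
          ContinuousOn.intervalIntegrable
            (by rw [uIcc_of_le ha't.le]
                exact hDcont.mono fun x hx => Ioo_subset_Icc_self (hsubIoo hx))
        have hadd := intervalIntegral.integral_add_adjacent_intervals hint1 hint2
        linarith
      -- step 3 : pass to the limit a' → a⁺
      have hineq : ε * (t - a) ≤ 2/3 * (t - a) * D t + 1/3 * (t - a) * D a := by
        have hneBot : (𝓝[Ioo a t] a).NeBot := left_nhdsWithin_Ioo_neBot hta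
        have hDintab : IntegrableOn D (Icc a b) := by
          exact hDcont.integrableOn_compact isCompact_Icc
        have hprim : ContinuousOn (fun r => ∫ x in a..r, D x) (Icc a b) := by
          have := intervalIntegral.continuousOn_primitive_interval
            (f := D) (μ := volume) (a := a) (b := b)
            (by rw [uIcc_of_le hab.le]; exact hDintab)
          rwa [uIcc_of_le hab.le] at this
        have hsubIooab : Ioo a t ⊆ Icc a b :=
          fun x hx => ⟨hx.1.le, hx.2.le.trans htmem.2⟩
        have hprimA : Filter.Tendsto (fun r => ∫ x in a..r, D x) (𝓝[Ioo a t] a) (𝓝 0) := by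
          have h0 : (∫ x in a..a, D x) = 0 := intervalIntegral.integral_same
          have := (hprim a (left_mem_Icc.2 hab.le)).mono hsubIooab
          rw [ContinuousWithinAt, h0] at this
          exact this
        have hDA : Filter.Tendsto D (𝓝[Ioo a t] a) (𝓝 (D a)) :=
          (hDcont a (left_mem_Icc.2 hab.le)).mono hsubIooab
        have hid : Filter.Tendsto (fun a' : ℝ => t - a') (𝓝[Ioo a t] a) (𝓝 (t - a)) :=
          ((continuous_const.sub continuous_id).tendsto a).mono_left nhdsWithin_le_nhds
        have hlim : Filter.Tendsto
            (fun a' => (∫ x in a..a', D x) + 2/3 * (t - a') * D t + 1/3 * (t - a') * D a')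
            (𝓝[Ioo a t] a)
            (𝓝 (0 + 2/3 * (t - a) * D t + 1/3 * (t - a) * D a)) := by
          exact (hprimA.add (((hid.const_mul (2/3)).mul_const (D t)))).add
            (((hid.const_mul (1/3)).mul hDA))
        have hev : ∀ᶠ a' in 𝓝[Ioo a t] a,
            ε * (t - a) ≤ (∫ x in a..a', D x) + 2/3 * (t - a') * D t + 1/3 * (t - a') * D a' :=
          eventually_mem_nhdsWithin.mono (fun a' ha' => hcore a' ha')
        have := ge_of_tendsto hlim hev
        linarith
      -- conclude
      have hta' : (0:ℝ) < t - a := sub_pos.2 hta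
      rw [← hDa]
      nlinarith [hineq, hta']
  refine le_csInf (hne.image _) ?_
  rintro y ⟨x, hx, rfl⟩
  exact le_trans hmain (htmin' x hx)
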